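/- (Proposition 2) Let N = max_i end^{v_i} over all ℋ-nodes v₁,…,v_h of the syntax tree of Φ. For any signal x : ℕ → 𝒳 and any k > N: x ⊨ Φ (i.e., (x, 0) ⊨ Φ) if and only if the root induced satisfaction-vector entry computed from the basic set I(x_{0:k-1}) satisfies ι^root_{I(x_{0:k-1})}[0] = 1. -/

import Mathlib

namespace STLMon

/-- Three-valued satisfaction status: violated `0`, satisfied `1`, uncertain `?`. -/
inductive SatVal : Type
  | zero : SatVal
  | one : SatVal
  | unk : SatVal
deriving DecidableEq

/-- Direction to a child in the syntax tree (`left` is also used for only-children). -/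
inductive Dir : Type
  | left : Dir
  | right : Dir
deriving DecidableEq

/-- STL fragment (3): `Φ ::= G_{[a,b]} Φ | Φ₁ U'_{[a,b]} Φ₂ | Φ₁ ∧ Φ₂ | x ∈ ℋ`. -/
inductive Frag (X : Type) : Type
  | reg : Set X → Frag X
  | conj : Frag X → Frag X → Frag X
  | glob : ℕ → ℕ → Frag X → Frag X
  | untl : ℕ → ℕ → Frag X → Frag X → Frag X

namespace Frag

variable {X : Type}

/-- Semantics of the fragment: `fsat Φ x k` means `(x,k) ⊨ Φ`. -/
def fsat : Frag X → (ℕ → X) → ℕ → Prop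
  | reg H, x, k => x k ∈ H
  | conj φ ψ, x, k => fsat φ x k ∧ fsat ψ x k
  | glob a b φ, x, k => ∀ k', k + a ≤ k' → k' ≤ k + b → fsat φ x k'
  | untl a b φ ψ, x, k =>
      ∃ k', k + a ≤ k' ∧ k' ≤ k + b ∧ fsat ψ x k' ∧
        ∀ k'', k + a ≤ k'' → k'' ≤ k' → fsat φ x k''

/-- A node of the syntax tree of `Φ` is a path (list of directions) from the root;
`subAt Φ p` is the subformula `Φ^v` rooted at the node `v` with path `p`, if it exists. -/
def subAt : Frag X → List Dir → Option (Frag X)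
  | φ, [] => some φ
  | conj φ _, Dir.left :: p => subAt φ p
  | conj _ ψ, Dir.right :: p => subAt ψ p
  | glob _ _ φ, Dir.left :: p => subAt φ p
  | untl _ _ φ _, Dir.left :: p => subAt φ p
  | untl _ _ _ ψ, Dir.right :: p => subAt ψ p
  | _, _ => none

/-- Left endpoint `int^v` of the evaluation horizon of node `v`:
the sum of `a^{v'}` over all (strict) ancestors `v'` of `v`. -/
def intOf : Frag X → List Dir → ℕ
  | _, [] => 0
  | conj φ _, Dir.left :: p => intOf φ p
  | conj _ ψ, Dir.right :: p => intOf ψ p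
  | glob a _ φ, Dir.left :: p => a + intOf φ p
  | untl a _ φ _, Dir.left :: p => a + intOf φ p
  | untl a _ _ ψ, Dir.right :: p => a + intOf ψ p
  | _, _ => 0

/-- Right endpoint `end^v` of the evaluation horizon of node `v`:
the sum of `b^{v'}` over all (strict) ancestors `v'` of `v`. -/
def endOf : Frag X → List Dir → ℕ
  | _, [] => 0
  | conj φ _, Dir.left :: p => endOf φ p
  | conj _ ψ, Dir.right :: p => endOf ψ p
  | glob _ b φ, Dir.left :: p => b + endOf φ p
  | untl _ b φ _, Dir.left :: p => b + endOf φ p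
  | untl _ b _ ψ, Dir.right :: p => b + endOf ψ p
  | _, _ => 0

/-- `p` is an `ℋ`-node (a predicate leaf) of the syntax tree of `Φ`. -/
def IsHNode (Φ : Frag X) (p : List Dir) : Prop :=
  ∃ H : Set X, subAt Φ p = some (reg H)

/-- The satisfaction region `ℋ^v` attached to the `ℋ`-node at path `p`. -/
def regionAt (Φ : Frag X) (p : List Dir) : Set X :=
  match subAt Φ p with
  | some (reg H) => H
  | _ => ∅

/-- `(p, t)` is a meaningful entry of a basic set: `p` is an `ℋ`-node and
`t` lies in its evaluation horizon `[int^p, end^p]`. -/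
def Relevant (Φ : Frag X) (p : List Dir) (t : ℕ) : Prop :=
  IsHNode Φ p ∧ intOf Φ p ≤ t ∧ t ≤ endOf Φ p

/-- A basic set of satisfaction vectors: one three-valued entry for each `ℋ`-node
and each instant of its evaluation horizon. -/
def BasicSet (Φ : Frag X) : Type := ∀ p t, Relevant Φ p t → SatVal

/-- The entry of a basic set, totalized by `?` outside the relevant positions. -/
noncomputable def val (Φ : Frag X) (I : BasicSet Φ) (p : List Dir) (t : ℕ) : SatVal :=
  @dite _ (Relevant Φ p t) (Classical.dec _) (fun h => I p t h) (fun _ => SatVal.unk)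

open Classical in
/-- Induced satisfaction vectors (Definition 5): `ind β φ p t` is the induced value
`ι^v[t]` of the node `v` at path `p` carrying subformula `φ`, computed bottom-up from
the values `β` of the `ℋ`-node leaves. -/
noncomputable def ind (β : List Dir → ℕ → SatVal) : Frag X → List Dir → ℕ → SatVal
  | reg _, p, t => β p t
  | conj φ ψ, p, t =>
      if ind β φ (p ++ [Dir.left]) t = SatVal.zero ∨
         ind β ψ (p ++ [Dir.right]) t = SatVal.zero then SatVal.zero
      else if ind β φ (p ++ [Dir.left]) t = SatVal.one ∧
              ind β ψ (p ++ [Dir.right]) t = SatVal.one then SatVal.one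
      else SatVal.unk
  | glob a b φ, p, t =>
      if ∃ t', a ≤ t' ∧ t' ≤ b ∧ ind β φ (p ++ [Dir.left]) (t + t') = SatVal.zero then
        SatVal.zero
      else if ∀ t', a ≤ t' → t' ≤ b → ind β φ (p ++ [Dir.left]) (t + t') = SatVal.one then
        SatVal.one
      else SatVal.unk
  | untl a b φ ψ, p, t =>
      if (∀ t', a ≤ t' → t' ≤ b → ind β ψ (p ++ [Dir.right]) (t + t') = SatVal.zero) ∨
         (∀ t', a ≤ t' → t' ≤ b → ind β ψ (p ++ [Dir.right]) (t + t') = SatVal.one →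
            ∃ t'', a ≤ t'' ∧ t'' ≤ t' ∧ ind β φ (p ++ [Dir.left]) (t + t'') = SatVal.zero) then
        SatVal.zero
      else if ∃ t', a ≤ t' ∧ t' ≤ b ∧ ind β ψ (p ++ [Dir.right]) (t + t') = SatVal.one ∧
              ∀ t'', a ≤ t'' → t'' ≤ t' → ind β φ (p ++ [Dir.left]) (t + t'') = SatVal.one then
        SatVal.one
      else SatVal.unk

open Classical in
/-- Online update of a basic set upon observing state `xk` at instant `k`:
in each `ℋ`-node vector whose horizon contains `k`, only the entry at position `k`
is changed, to `1` if `xk ∈ ℋ^{v_i}` and to `0` otherwise. -/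
noncomputable def updateB (Φ : Frag X) (I : BasicSet Φ) (k : ℕ) (xk : X) : BasicSet Φ :=
  fun p t h =>
    if t = k then (if xk ∈ regionAt Φ p then SatVal.one else SatVal.zero) else I p t h

/-- The initial basic set `I₀`: every entry is `?`. -/
def initB (Φ : Frag X) : BasicSet Φ := fun _ _ _ => SatVal.unk

/-- `basicOf Φ x k` is `I(x_{0:k-1})`, obtained from `I₀` by successive updates
with `x 0, …, x (k-1)`. -/
noncomputable def basicOf (Φ : Frag X) (x : ℕ → X) : ℕ → BasicSet Φ
  | 0 => initB Φ
  | k + 1 => updateB Φ (basicOf Φ x k) k (x k)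

/-- Membership in `𝓘_k`: entries are `?` exactly at positions `t ≥ k`. -/
def InFam (Φ : Frag X) (I : BasicSet Φ) (k : ℕ) : Prop :=
  ∀ p t (h : Relevant Φ p t), (I p t h = SatVal.unk ↔ k ≤ t)

/-- The induced root satisfaction value `ι^root_I[0]` of a basic set `I`. -/
noncomputable def rootVal (Φ : Frag X) (I : BasicSet Φ) : SatVal :=
  ind (val Φ I) Φ [] 0

/-- `Is ∈ succ(I, k)`: `I ∈ 𝕀_k`, `Is ∈ 𝕀_{k+1}`, and `Is` agrees with `I`
on every `ℋ`-node entry at positions `t ∈ [int^v, min(k-1, end^v)]`. -/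
def Succ (Φ : Frag X) (k : ℕ) (I Is : BasicSet Φ) : Prop :=
  InFam Φ I k ∧ rootVal Φ I ≠ SatVal.zero ∧
  InFam Φ Is (k + 1) ∧ rootVal Φ Is ≠ SatVal.zero ∧
  ∀ p t (h : Relevant Φ p t), t < k → I p t h = Is p t h

/-- The consistent region `H_k(I, I_s) = ⋂ᵢ H_{i,k}`, where `H_{i,k}` is `ℋ^{v_i}` if
`ι_s^{v_i}[k] = 1`, the complement of `ℋ^{v_i}` if `ι_s^{v_i}[k] = 0`, and `𝒳` if `k`
is outside the horizon of `v_i`. -/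
def consReg (Φ : Frag X) (Is : BasicSet Φ) (k : ℕ) : Set X :=
  {x | ∀ p (h : Relevant Φ p k),
        (Is p k h = SatVal.zero → x ∉ regionAt Φ p) ∧
        (Is p k h = SatVal.one → x ∈ regionAt Φ p)}

end Frag

/-- Trajectory of the control system `x_{k+1} = f(x_k, u_k)`:
`traj f x u n` is the state after `n` steps from `x` under inputs `u`. -/
def traj {X U : Type} (f : X → U → X) (x : X) (u : ℕ → U) : ℕ → X
  | 0 => x
  | n + 1 => f (traj f x u n) (u n)

/-- The signal obtained from the prefix `xpre` on positions `0, …, k-1` followed by the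
state `xk` at position `k` and the trajectory `ξ_f(xk, u)` afterwards. -/
def runFrom {X U : Type} (f : X → U → X) (k : ℕ) (xpre : ℕ → X) (xk : X) (u : ℕ → U) :
    ℕ → X :=
  fun n => if n < k then xpre n else traj f xk u (n - k)

/-- One-step feasible set `Υ(S) = {x | ∃ u ∈ 𝒰, f(x,u) ∈ S}`. -/
def oneStep {X U : Type} (f : X → U → X) (S : Set X) : Set X :=
  {x | ∃ u : U, f x u ∈ S}

/-- The `I`-determined feasible set `X_k^I`: states `xk` from which some control makes the
signal, consisting of some prefix consistent with `I` followed by `xk` and the resulting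
trajectory, satisfy `Φ`. -/
noncomputable def feasSet {X U : Type} (Φ : Frag X) (f : X → U → X) (k : ℕ)
    (I : Frag.BasicSet Φ) : Set X :=
  {xk | ∃ xpre : ℕ → X, Frag.basicOf Φ xpre k = I ∧
          ∃ u : ℕ → U, Frag.fsat Φ (runFrom f k xpre xk u) 0}

end STLMon

open STLMon STLMon.Frag

namespace STLMon.Frag

open scoped Classical

variable {X : Type}

lemma ind_determined (x : ℕ → X) (β : List Dir → ℕ → SatVal) :
    ∀ (φ : Frag X) (p : List Dir) (t : ℕ),
    (∀ q (H : Set X) s, subAt φ q = some (reg H) →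
       t + intOf φ q ≤ s → s ≤ t + endOf φ q →
       β (p ++ q) s = (if x s ∈ H then SatVal.one else SatVal.zero)) →
    ind β φ p t = (if fsat φ x t then SatVal.one else SatVal.zero) := by
  intro φ
  induction φ with
  | reg H =>
      intro p t hβ
      have := hβ [] H t rfl (by simp [intOf]) (by simp [endOf])
      simp only [ind, fsat, List.append_nil] at this ⊢
      convert this
      by_cases hx : x t ∈ H <;> simp [hx]
  | conj φ ψ ihφ ihψ =>
      intro p t hβ
      have hφ := ihφ (p ++ [Dir.left]) t (by
        intro q H s hq h1 h2
        have := hβ (Dir.left :: q) H s (by simpa [subAt] using hq)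
          (by simpa [intOf] using h1) (by simpa [endOf] using h2)
        simpa [List.append_assoc] using this)
      have hψ := ihψ (p ++ [Dir.right]) t (by
        intro q H s hq h1 h2
        have := hβ (Dir.right :: q) H s (by simpa [subAt] using hq)
          (by simpa [intOf] using h1) (by simpa [endOf] using h2)
        simpa [List.append_assoc] using this)
      by_cases h1 : fsat φ x t <;> by_cases h2 : fsat ψ x t <;>
        simp [ind, fsat, hφ, hψ, h1, h2]
  | glob a b φ ih =>
      intro p t hβ
      have hch : ∀ t', a ≤ t' → t' ≤ b →
          ind β φ (p ++ [Dir.left]) (t + t') =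
            (if fsat φ x (t + t') then SatVal.one else SatVal.zero) := by
        intro t' ha hb
        apply ih
        intro q H s hq hs1 hs2
        have h1 : t + intOf (glob a b φ) (Dir.left :: q) ≤ s := by
          simp only [intOf]; omega
        have h2 : s ≤ t + endOf (glob a b φ) (Dir.left :: q) := by
          simp only [endOf]; omega
        have := hβ (Dir.left :: q) H s (by simpa [subAt] using hq) h1 h2
        simpa [List.append_assoc] using this
      by_cases h : fsat (glob a b φ) x t
      · have hz : ¬ ∃ t', a ≤ t' ∧ t' ≤ b ∧
            ind β φ (p ++ [Dir.left]) (t + t') = SatVal.zero := by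
          rintro ⟨t', ha, hb, h3⟩
          rw [hch t' ha hb] at h3
          have := h (t + t') (by omega) (by omega)
          simp [this] at h3
        have ho : ∀ t', a ≤ t' → t' ≤ b →
            ind β φ (p ++ [Dir.left]) (t + t') = SatVal.one := by
          intro t' ha hb
          rw [hch t' ha hb]
          have := h (t + t') (by omega) (by omega)
          simp [this]
        simp only [ind]
        rw [if_neg hz, if_pos ho, if_pos h]
      · simp only [fsat, not_forall] at h
        obtain ⟨k', ha, hb, hns⟩ := h
        have hz : ∃ t', a ≤ t' ∧ t' ≤ b ∧
            ind β φ (p ++ [Dir.left]) (t + t') = SatVal.zero := by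
          refine ⟨k' - t, by omega, by omega, ?_⟩
          have hkk : t + (k' - t) = k' := by omega
          rw [hch (k' - t) (by omega) (by omega), hkk]
          simp [hns]
        have hnf : ¬ fsat (glob a b φ) x t := by
          simp only [fsat, not_forall]; exact ⟨k', ha, hb, hns⟩
        simp [ind, hz, hnf]
  | untl a b φ ψ ihφ ihψ =>
      intro p t hβ
      have hchl : ∀ t', a ≤ t' → t' ≤ b →
          ind β φ (p ++ [Dir.left]) (t + t') =
            (if fsat φ x (t + t') then SatVal.one else SatVal.zero) := by
        intro t' ha hb
        apply ihφ
        intro q H s hq hs1 hs2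
        have h1 : t + intOf (untl a b φ ψ) (Dir.left :: q) ≤ s := by
          simp only [intOf]; omega
        have h2 : s ≤ t + endOf (untl a b φ ψ) (Dir.left :: q) := by
          simp only [endOf]; omega
        have := hβ (Dir.left :: q) H s (by simpa [subAt] using hq) h1 h2
        simpa [List.append_assoc] using this
      have hchr : ∀ t', a ≤ t' → t' ≤ b →
          ind β ψ (p ++ [Dir.right]) (t + t') =
            (if fsat ψ x (t + t') then SatVal.one else SatVal.zero) := by
        intro t' ha hb
        apply ihψ
        intro q H s hq hs1 hs2
        have h1 : t + intOf (untl a b φ ψ) (Dir.right :: q) ≤ s := by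
          simp only [intOf]; omega
        have h2 : s ≤ t + endOf (untl a b φ ψ) (Dir.right :: q) := by
          simp only [endOf]; omega
        have := hβ (Dir.right :: q) H s (by simpa [subAt] using hq) h1 h2
        simpa [List.append_assoc] using this
      by_cases h : fsat (untl a b φ ψ) x t
      · obtain ⟨k', ha, hb, hs, hall⟩ := h
        have hone : ∃ t', a ≤ t' ∧ t' ≤ b ∧
            ind β ψ (p ++ [Dir.right]) (t + t') = SatVal.one ∧
            ∀ t'', a ≤ t'' → t'' ≤ t' →
              ind β φ (p ++ [Dir.left]) (t + t'') = SatVal.one := by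
          refine ⟨k' - t, by omega, by omega, ?_, ?_⟩
          · have hkk : t + (k' - t) = k' := by omega
            rw [hchr (k' - t) (by omega) (by omega), hkk]
            simp [hs]
          · intro t'' ha'' hb''
            rw [hchl t'' ha'' (by omega)]
            have := hall (t + t'') (by omega) (by omega)
            simp [this]
        have hz : ¬ ((∀ t', a ≤ t' → t' ≤ b →
              ind β ψ (p ++ [Dir.right]) (t + t') = SatVal.zero) ∨
            (∀ t', a ≤ t' → t' ≤ b →
              ind β ψ (p ++ [Dir.right]) (t + t') = SatVal.one →
              ∃ t'', a ≤ t'' ∧ t'' ≤ t' ∧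
                ind β φ (p ++ [Dir.left]) (t + t'') = SatVal.zero)) := by
          obtain ⟨t', ha', hb', hr, hl⟩ := hone
          rintro (hc | hc)
          · have := hc t' ha' hb'
            rw [hr] at this; exact SatVal.noConfusion this
          · obtain ⟨t'', ha'', hb'', hz''⟩ := hc t' ha' hb' hr
            have := hl t'' ha'' hb''
            rw [hz''] at this; exact SatVal.noConfusion this
        have hsat : fsat (untl a b φ ψ) x t := ⟨k', ha, hb, hs, hall⟩
        simp only [ind, if_neg hz, if_pos hone, if_pos hsat]
      · have h' := h
        simp only [fsat, not_exists, not_and, not_forall] at h'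
        have hz : (∀ t', a ≤ t' → t' ≤ b →
              ind β ψ (p ++ [Dir.right]) (t + t') = SatVal.zero) ∨
            (∀ t', a ≤ t' → t' ≤ b →
              ind β ψ (p ++ [Dir.right]) (t + t') = SatVal.one →
              ∃ t'', a ≤ t'' ∧ t'' ≤ t' ∧
                ind β φ (p ++ [Dir.left]) (t + t'') = SatVal.zero) := by
          right
          intro t' ha' hb' hr
          rw [hchr t' ha' hb'] at hr
          have hfs : fsat ψ x (t + t') := by
            by_contra hc; simp [hc] at hr
          have hcontra : ¬ (fsat ψ x (t + t') ∧
              ∀ k'', t + a ≤ k'' → k'' ≤ t + t' → fsat φ x k'') := by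
            intro ⟨h1, h2⟩
            exact h ⟨t + t', by omega, by omega, h1, h2⟩
          have : ∃ k'', t + a ≤ k'' ∧ k'' ≤ t + t' ∧ ¬ fsat φ x k'' := by
            by_contra hc
            push_neg at hc
            exact hcontra ⟨hfs, fun k'' h1 h2 => hc k'' h1 h2⟩
          obtain ⟨k'', h1, h2, h3⟩ := this
          refine ⟨k'' - t, by omega, by omega, ?_⟩
          have hkk : t + (k'' - t) = k'' := by omega
          rw [hchl (k'' - t) (by omega) (by omega), hkk]
          simp [h3]
        simp only [ind, if_pos hz, if_neg h]

lemma basicOf_val (Φ : Frag X) (x : ℕ → X) :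
    ∀ (k : ℕ) p t (h : Relevant Φ p t), t < k →
      basicOf Φ x k p t h =
        (if x t ∈ regionAt Φ p then SatVal.one else SatVal.zero) := by
  intro k
  induction k with
  | zero => intro p t h ht; omega
  | succ k ih =>
      intro p t h ht
      by_cases hteq : t = k
      · subst hteq; simp [basicOf, updateB]
      · have hlt : t < k := by omega
        simp [basicOf, updateB, hteq, ih p t h hlt]

end STLMon.Frag

/-- (Proposition 2) If `k > N`, where `N` is the largest right endpoint `end^{v_i}` over
all `ℋ`-nodes of the syntax tree of `Φ`, then `x ⊨ Φ` (i.e. `(x,0) ⊨ Φ`) iff the root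
induced satisfaction-vector entry computed from `I(x_{0:k-1})` satisfies
`ι^root_{I(x_{0:k-1})}[0] = 1`. -/
theorem sat_iff_rootVal_one {X : Type} (Φ : Frag X) (x : ℕ → X) (k : ℕ)
    (hk : ∀ p, IsHNode Φ p → endOf Φ p < k) :
    fsat Φ x 0 ↔ rootVal Φ (basicOf Φ x k) = SatVal.one := by
  classical
  have hmain : ind (val Φ (basicOf Φ x k)) Φ [] 0 =
      (if fsat Φ x 0 then SatVal.one else SatVal.zero) := by
    apply ind_determined
    intro q H s hq h1 h2
    have hrel : Relevant Φ q s :=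
      ⟨⟨H, hq⟩, by simpa using h1, by simpa using h2⟩
    have hs : s < k := by
      have := hk q ⟨H, hq⟩
      have h2' : s ≤ endOf Φ q := by simpa using h2
      omega
    have hreg : regionAt Φ q = H := by simp [regionAt, hq]
    have hval : val Φ (basicOf Φ x k) q s = basicOf Φ x k q s hrel := by
      simp [val, hrel]
    simp only [List.nil_append, hval, basicOf_val Φ x k q s hrel hs, hreg]
  constructor
  · intro h; rw [rootVal, hmain, if_pos h]
  · intro h
    by_contra hc
    rw [rootVal, hmain, if_neg hc] at h
    exact SatVal.noConfusion h
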